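/- Let m be a positive integer and x_1,...,x_m odd positive integers. The inequalities 2·σ_{k−i}(x_i,...,x_k) > x_i²·σ_{k−i−1}(x_{i+1},...,x_k) for all 1 ≤ i ≤ k ≤ m hold if and only if for all 1 ≤ i < k ≤ m one has x_k > (x_i − 2)·x_i⋯x_{k−1} / (2·σ_{k−i−1}(x_i,...,x_{k−1}) − x_i²·σ_{k−i−2}(x_{i+1},...,x_{k−1})), where in the latter condition the denominators are positive. -/

import Mathlib

/-- The elementary symmetric polynomial of (integer) degree `d` in the variables
`f j` for `j ∈ s`, with value `0` for negative `d` (and `1` for `d = 0`). -/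
def esymZ (s : Finset ℕ) (f : ℕ → ℤ) (d : ℤ) : ℤ :=
  if d < 0 then 0 else ∑ u ∈ s.powersetCard d.toNat, ∏ j ∈ u, f j

lemma esymZ_neg {s : Finset ℕ} {f : ℕ → ℤ} {d : ℤ} (hd : d < 0) : esymZ s f d = 0 := if_pos hd

lemma esymZ_zero (s : Finset ℕ) (f : ℕ → ℤ) : esymZ s f 0 = 1 := by
  simp [esymZ]

lemma esymZ_insert {a : ℕ} {s : Finset ℕ} (ha : a ∉ s) (f : ℕ → ℤ) (d : ℤ) :
    esymZ (insert a s) f d = esymZ s f d + f a * esymZ s f (d - 1) := by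
  rcases lt_trichotomy d 0 with h | h | h
  · simp [esymZ, h, show d - 1 < 0 by linarith]
  · subst h
    rw [esymZ_zero, esymZ_zero, esymZ_neg (show (0:ℤ) - 1 < 0 by norm_num)]
    ring
  · obtain ⟨n, rfl⟩ : ∃ n : ℕ, d = (n : ℤ) + 1 := ⟨(d - 1).toNat, by omega⟩
    have hd1 : ((n:ℤ) + 1).toNat = n + 1 := by omega
    have hd2 : ¬ ((n:ℤ) + 1 < 0) := by omega
    have hd3 : ¬ ((n:ℤ) + 1 - 1 < 0) := by omega
    have hd4 : ((n:ℤ) + 1 - 1).toNat = n := by omega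
    simp only [esymZ, if_neg hd2, if_neg hd3, hd1, hd4]
    rw [show n + 1 = n.succ from rfl, Finset.powersetCard_succ_insert ha,
      Finset.sum_union, Finset.sum_image, Finset.mul_sum]
    · congr 1
      refine Finset.sum_congr rfl fun t ht => ?_
      have hat : a ∉ t := fun h => ha ((Finset.mem_powersetCard.mp ht).1 h)
      rw [Finset.prod_insert hat]
    · intro t ht u hu h
      have hat : a ∉ t := fun hh => ha ((Finset.mem_powersetCard.mp ht).1 hh)
      have hau : a ∉ u := fun hh => ha ((Finset.mem_powersetCard.mp hu).1 hh)
      have := congrArg (Finset.erase · a) h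
      simpa [Finset.erase_insert hat, Finset.erase_insert hau] using this
    · rw [Finset.disjoint_left]
      intro u hu hu'
      obtain ⟨t, _, rfl⟩ := Finset.mem_image.mp hu'
      exact ha ((Finset.mem_powersetCard.mp hu).1 (Finset.mem_insert_self a t))

lemma esymZ_card (s : Finset ℕ) (f : ℕ → ℤ) : esymZ s f (s.card : ℤ) = ∏ j ∈ s, f j := by
  simp [esymZ, Finset.powersetCard_self]

lemma key (x : ℕ → ℕ) (i k : ℕ) (hik : i < k) :
    2 * esymZ (Finset.Icc i k) (fun j => (x j : ℤ)) ((k : ℤ) - i) -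
      (x i : ℤ) ^ 2 * esymZ (Finset.Icc (i + 1) k) (fun j => (x j : ℤ)) ((k : ℤ) - i - 1) =
    (x k : ℤ) * (2 * esymZ (Finset.Icc i (k - 1)) (fun j => (x j : ℤ)) ((k : ℤ) - i - 1) -
        (x i : ℤ) ^ 2 * esymZ (Finset.Icc (i + 1) (k - 1)) (fun j => (x j : ℤ)) ((k : ℤ) - i - 2))
      - ((x i : ℤ) - 2) * ∏ j ∈ Finset.Icc i (k - 1), (x j : ℤ) := by
  have h1 : Finset.Icc i k = insert k (Finset.Icc i (k - 1)) := by
    ext j; simp [Finset.mem_Icc, Finset.mem_insert]; omega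
  have h2 : Finset.Icc (i + 1) k = insert k (Finset.Icc (i + 1) (k - 1)) := by
    ext j; simp [Finset.mem_Icc, Finset.mem_insert]; omega
  have hk1 : k ∉ Finset.Icc i (k - 1) := by simp only [Finset.mem_Icc, not_and, not_le]; omega
  have hk2 : k ∉ Finset.Icc (i + 1) (k - 1) := by simp only [Finset.mem_Icc, not_and, not_le]; omega
  rw [h1, h2, esymZ_insert hk1, esymZ_insert hk2]
  have hc1 : ((Finset.Icc i (k - 1)).card : ℤ) = (k : ℤ) - i := by
    rw [Nat.card_Icc]; omega
  have hc2 : ((Finset.Icc (i + 1) (k - 1)).card : ℤ) = (k : ℤ) - i - 1 := by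
    rw [Nat.card_Icc]; omega
  have e1 : esymZ (Finset.Icc i (k - 1)) (fun j => (x j : ℤ)) ((k : ℤ) - i) =
      ∏ j ∈ Finset.Icc i (k - 1), (x j : ℤ) := by rw [← hc1, esymZ_card]
  have e2 : esymZ (Finset.Icc (i + 1) (k - 1)) (fun j => (x j : ℤ)) ((k : ℤ) - i - 1) =
      ∏ j ∈ Finset.Icc (i + 1) (k - 1), (x j : ℤ) := by rw [← hc2, esymZ_card]
  have hP : ∏ j ∈ Finset.Icc i (k - 1), (x j : ℤ) =
      (x i : ℤ) * ∏ j ∈ Finset.Icc (i + 1) (k - 1), (x j : ℤ) := by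
    have : Finset.Icc i (k - 1) = insert i (Finset.Icc (i + 1) (k - 1)) := by
      ext j; simp [Finset.mem_Icc, Finset.mem_insert]; omega
    rw [this, Finset.prod_insert (by simp only [Finset.mem_Icc, not_and, not_le]; omega)]
  rw [e1, e2, hP]
  ring

/-- indices shifted to be 0-based: for odd positive `x 0, …, x (m-1)`, the
inequalities `2·σ_{k−i}(x i,…,x k) > (x i)²·σ_{k−i−1}(x (i+1),…,x k)` for all
`i ≤ k < m` hold iff for all `i < k < m` the denominator
`2·σ_{k−i−1}(x i,…,x (k-1)) − (x i)²·σ_{k−i−2}(x (i+1),…,x (k-1))` is positive and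
`x k > (x i − 2)·(x i ⋯ x (k-1)) / (that denominator)` (over `ℚ`). -/
theorem stmt_7 (m : ℕ) (hm : 0 < m) (x : ℕ → ℕ)
    (hx : ∀ i < m, Odd (x i) ∧ 0 < x i) :
    (∀ i k : ℕ, i ≤ k → k < m →
        2 * esymZ (Finset.Icc i k) (fun j => (x j : ℤ)) ((k : ℤ) - i) >
          (x i : ℤ) ^ 2 * esymZ (Finset.Icc (i + 1) k) (fun j => (x j : ℤ)) ((k : ℤ) - i - 1)) ↔
      (∀ i k : ℕ, i < k → k < m →
        0 < 2 * esymZ (Finset.Icc i (k - 1)) (fun j => (x j : ℤ)) ((k : ℤ) - i - 1) -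
            (x i : ℤ) ^ 2 * esymZ (Finset.Icc (i + 1) (k - 1)) (fun j => (x j : ℤ)) ((k : ℤ) - i - 2) ∧
        (x k : ℚ) >
          (((x i : ℚ) - 2) * ∏ j ∈ Finset.Icc i (k - 1), (x j : ℚ)) /
            ((2 * esymZ (Finset.Icc i (k - 1)) (fun j => (x j : ℤ)) ((k : ℤ) - i - 1) -
              (x i : ℤ) ^ 2 * esymZ (Finset.Icc (i + 1) (k - 1)) (fun j => (x j : ℤ))
                ((k : ℤ) - i - 2) : ℤ) : ℚ)) := by
  constructor
  · intro H i k hik hkm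
    have hD' : 0 < 2 * esymZ (Finset.Icc i (k - 1)) (fun j => (x j : ℤ)) ((k : ℤ) - i - 1) -
        (x i : ℤ) ^ 2 * esymZ (Finset.Icc (i + 1) (k - 1)) (fun j => (x j : ℤ)) ((k : ℤ) - i - 2) := by
      have e1 : (k : ℤ) - i - 1 = ((k - 1 : ℕ) : ℤ) - i := by omega
      have e2 : (k : ℤ) - i - 2 = ((k - 1 : ℕ) : ℤ) - i - 1 := by omega
      rw [e1, e2]
      linarith [H i (k - 1) (by omega) (by omega)]
    refine ⟨hD', ?_⟩
    have hA := H i k (le_of_lt hik) hkm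
    rw [gt_iff_lt, div_lt_iff₀ (by exact_mod_cast hD')]
    have hkey := key x i k hik
    have hZ : ((x i : ℤ) - 2) * ∏ j ∈ Finset.Icc i (k - 1), (x j : ℤ) <
        (x k : ℤ) * (2 * esymZ (Finset.Icc i (k - 1)) (fun j => (x j : ℤ)) ((k : ℤ) - i - 1) -
          (x i : ℤ) ^ 2 * esymZ (Finset.Icc (i + 1) (k - 1)) (fun j => (x j : ℤ)) ((k : ℤ) - i - 2)) := by
      linarith
    calc (((x i : ℚ) - 2) * ∏ j ∈ Finset.Icc i (k - 1), (x j : ℚ))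
        = ((((x i : ℤ) - 2) * ∏ j ∈ Finset.Icc i (k - 1), (x j : ℤ) : ℤ) : ℚ) := by push_cast; ring
      _ < _ := by exact_mod_cast hZ
  · intro H i k hik hkm
    rcases eq_or_lt_of_le hik with rfl | hlt
    · have e1 : (i : ℤ) - i = 0 := by ring
      rw [e1, esymZ_zero, esymZ_neg (show (0:ℤ) - 1 < 0 by norm_num)]
      norm_num
    · obtain ⟨h1, h2⟩ := H i k hlt hkm
      rw [gt_iff_lt, div_lt_iff₀ (by exact_mod_cast h1)] at h2
      have hZ : ((x i : ℤ) - 2) * ∏ j ∈ Finset.Icc i (k - 1), (x j : ℤ) <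
          (x k : ℤ) * (2 * esymZ (Finset.Icc i (k - 1)) (fun j => (x j : ℤ)) ((k : ℤ) - i - 1) -
            (x i : ℤ) ^ 2 * esymZ (Finset.Icc (i + 1) (k - 1)) (fun j => (x j : ℤ)) ((k : ℤ) - i - 2)) := by
        have : ((((x i : ℤ) - 2) * ∏ j ∈ Finset.Icc i (k - 1), (x j : ℤ) : ℤ) : ℚ) <
            ((x k : ℤ) * (2 * esymZ (Finset.Icc i (k - 1)) (fun j => (x j : ℤ)) ((k : ℤ) - i - 1) -
              (x i : ℤ) ^ 2 * esymZ (Finset.Icc (i + 1) (k - 1)) (fun j => (x j : ℤ)) ((k : ℤ) - i - 2)) : ℚ) := by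
          push_cast
          exact_mod_cast h2
        exact_mod_cast this
      have hkey := key x i k hlt
      linarith
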